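/- Let F be a field and P(x_1,...,x_N) a nonzero polynomial over F. For each i, let S_i be a finite nonempty subset of F, let d_i be the degree of x_i in P, and choose each x_i independently and uniformly at random from S_i. Then the probability that P(x_1,...,x_N) = 0 is at most the sum over i of d_i/|S_i|. -/

import Mathlib

open Finset Fintype MvPolynomial Polynomial

private lemma card_filter_piFinset_cons {β : Type*} [DecidableEq β] {n : ℕ}
    (S : Fin (n + 1) → Finset β) (p : (Fin (n + 1) → β) → Prop) [DecidablePred p] :
    ((Fintype.piFinset S).filter p).card =
      ∑ y ∈ Fintype.piFinset (Fin.tail S),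
        ((S 0).filter (fun x0 => p (Fin.cons x0 y))).card := by
  have h : Fintype.piFinset S
      = (S 0 ×ˢ Fintype.piFinset (Fin.tail S)).map (Fin.consEquiv _).toEmbedding := by
    have := Finset.filter_piFinset_eq_map_consEquiv S (fun _ => True)
    simpa using this
  rw [h, Finset.filter_map, Finset.card_map, Finset.card_filter, Finset.sum_product_right]
  refine Finset.sum_congr rfl fun y _ => ?_
  rw [Finset.card_filter]
  refine Finset.sum_congr rfl fun x _ => ?_
  simp [Fin.consEquiv]; congr 1

private lemma sz_aux (F : Type*) [Field F] [DecidableEq F] :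
    ∀ (n : ℕ) (P : MvPolynomial (Fin n) F), P ≠ 0 →
    ∀ (S : Fin n → Finset F), (∀ i, (S i).Nonempty) →
    (((Fintype.piFinset S).filter (fun x => MvPolynomial.eval x P = 0)).card : ℝ) /
      ((Fintype.piFinset S).card : ℝ) ≤
    ∑ i, (P.degreeOf i : ℝ) / ((S i).card : ℝ) := by
  intro n
  induction n with
  | zero =>
    intro P hP S hS
    obtain ⟨a, rfl⟩ := MvPolynomial.C_surjective (Fin 0) P
    have ha : a ≠ 0 := fun h => hP (by rw [h, map_zero])
    simp [ha]
  | succ n ih =>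
    intro P hP S hS
    set q := finSuccEquiv F n P with hqdef
    have hq0 : q ≠ 0 := fun h => hP ((finSuccEquiv F n).injective (by simp [← hqdef, h]))
    have hdq : q.natDegree = P.degreeOf 0 := natDegree_finSuccEquiv P
    set d := P.degreeOf 0 with hd
    set c := q.leadingCoeff with hcdef
    have hc0 : c ≠ 0 := Polynomial.leadingCoeff_ne_zero.mpr hq0
    set T := Fin.tail S with hT
    have hTne : ∀ i, (T i).Nonempty := fun i => hS i.succ
    set M := (Fintype.piFinset T).card with hM
    have hMpos : 0 < M := Finset.card_pos.mpr (Fintype.piFinset_nonempty.mpr hTne)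
    have h0pos : 0 < (S 0).card := Finset.card_pos.mpr (hS 0)
    set A' := (Fintype.piFinset T).filter (fun y => MvPolynomial.eval y c = 0) with hA'
    -- counting bound
    have key : (((Fintype.piFinset S).filter (fun x => MvPolynomial.eval x P = 0)).card : ℕ)
        ≤ (S 0).card * A'.card + d * M := by
      have hsub : (Fintype.piFinset S).filter (fun x => MvPolynomial.eval x P = 0)
          ⊆ ((Fintype.piFinset S).filter (fun x => MvPolynomial.eval (Fin.tail x) c = 0))
            ∪ ((Fintype.piFinset S).filter
                (fun x => MvPolynomial.eval (Fin.tail x) c ≠ 0 ∧ MvPolynomial.eval x P = 0)) := by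
        intro x hx
        simp only [Finset.mem_filter, Finset.mem_union] at *
        tauto
      have hA : ((Fintype.piFinset S).filter
          (fun x => MvPolynomial.eval (Fin.tail x) c = 0)).card = (S 0).card * A'.card :=
        Finset.card_consEquiv_filter_piFinset S (fun y => MvPolynomial.eval y c = 0)
      have hB : ((Fintype.piFinset S).filter
          (fun x => MvPolynomial.eval (Fin.tail x) c ≠ 0 ∧ MvPolynomial.eval x P = 0)).card
          ≤ d * M := by
        have hcount := card_filter_piFinset_cons (β := F) (n := n) S
          (fun x => MvPolynomial.eval (Fin.tail x) c ≠ 0 ∧ MvPolynomial.eval x P = 0)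
        refine le_trans (le_of_eq hcount) ?_
        have hbd : ∀ y ∈ Fintype.piFinset T,
            ((S 0).filter (fun x0 =>
              MvPolynomial.eval (Fin.tail (Fin.cons x0 y : Fin (n + 1) → F)) c ≠ 0 ∧
              MvPolynomial.eval (Fin.cons x0 y) P = 0)).card ≤ d := by
          intro y _
          by_cases hyc : MvPolynomial.eval y c = 0
          · simp [hyc]
          · set qy := q.map (MvPolynomial.eval y) with hqy
            have hqy0 : qy ≠ 0 := by
              intro h
              apply hyc
              have : qy.coeff q.natDegree = 0 := by rw [h]; simp
              rwa [hqy, Polynomial.coeff_map] at this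
            have hsub2 : (S 0).filter (fun x0 =>
                MvPolynomial.eval (Fin.tail (Fin.cons x0 y : Fin (n + 1) → F)) c ≠ 0 ∧
                MvPolynomial.eval (Fin.cons x0 y) P = 0) ⊆ qy.roots.toFinset := by
              intro x0 hx0
              simp only [Finset.mem_filter, Fin.tail_cons] at hx0
              rw [Multiset.mem_toFinset, Polynomial.mem_roots hqy0]
              have := hx0.2.2
              rw [eval_eq_eval_mv_eval'] at this
              exact this
            calc _ ≤ qy.roots.toFinset.card := Finset.card_le_card hsub2
              _ ≤ Multiset.card qy.roots := Multiset.toFinset_card_le _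
              _ ≤ qy.natDegree := qy.card_roots' 
              _ ≤ q.natDegree := Polynomial.natDegree_map_le
              _ = d := hdq
        calc _ ≤ ∑ _y ∈ Fintype.piFinset T, d := Finset.sum_le_sum hbd
          _ = M * d := by rw [Finset.sum_const, smul_eq_mul]
          _ = d * M := mul_comm _ _
      calc _ ≤ _ := Finset.card_le_card hsub
        _ ≤ _ + _ := Finset.card_union_le _ _
        _ ≤ (S 0).card * A'.card + d * M := by rw [hA]; exact Nat.add_le_add_left hB _
    have hcard : ((Fintype.piFinset S).card : ℝ) = (S 0).card * M := by
      have hnat : (Fintype.piFinset S).card = (S 0).card * M := by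
        rw [hM, Fintype.card_piFinset, Fintype.card_piFinset, Fin.prod_univ_succ]
        rfl
      exact_mod_cast hnat
    have hih : (A'.card : ℝ) / M ≤ ∑ i : Fin n, ((c.degreeOf i : ℝ) / ((T i).card : ℝ)) :=
      ih c hc0 T hTne
    have hih2 : (A'.card : ℝ) / M ≤ ∑ i : Fin n, ((P.degreeOf i.succ : ℝ) / ((S i.succ).card : ℝ)) := by
      refine hih.trans (Finset.sum_le_sum fun i _ => ?_)
      have : c.degreeOf i ≤ P.degreeOf i.succ := by
        rw [hcdef, Polynomial.leadingCoeff]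
        exact degreeOf_coeff_finSuccEquiv P i q.natDegree
      show (c.degreeOf i : ℝ) / ((S i.succ).card : ℝ) ≤ _
      gcongr
    have hS0R : (0:ℝ) < ((S 0).card : ℝ) := by exact_mod_cast h0pos
    have hMR : (0:ℝ) < (M : ℝ) := by exact_mod_cast hMpos
    have main : (((Fintype.piFinset S).filter (fun x => MvPolynomial.eval x P = 0)).card : ℝ) /
        ((Fintype.piFinset S).card : ℝ) ≤ (A'.card : ℝ) / M + (d : ℝ) / (S 0).card := by
      rw [hcard]
      calc (((Fintype.piFinset S).filter (fun x => MvPolynomial.eval x P = 0)).card : ℝ) /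
          (((S 0).card : ℝ) * M)
          ≤ (((S 0).card : ℝ) * A'.card + (d : ℝ) * M) / (((S 0).card : ℝ) * M) := by
            gcongr
            exact_mod_cast key
        _ = (A'.card : ℝ) / M + (d : ℝ) / (S 0).card := by
            rw [add_div, mul_div_mul_left _ _ hS0R.ne', mul_comm ((S 0).card : ℝ) (M : ℝ),
              mul_comm ((d : ℝ)) ((M : ℝ)), mul_div_mul_left _ _ hMR.ne']
    rw [Fin.sum_univ_succ]
    refine main.trans ?_
    rw [add_comm]
    exact add_le_add le_rfl hih2

/-- Non-uniform Schwartz-Zippel: variables chosen uniformly from possibly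
different finite sets. -/
theorem stmt_0 (F : Type*) [Field F] [DecidableEq F] (N : ℕ)
    (P : MvPolynomial (Fin N) F) (hP : P ≠ 0)
    (S : Fin N → Finset F) (hS : ∀ i, (S i).Nonempty) :
    (((Fintype.piFinset S).filter
        (fun x => MvPolynomial.eval x P = 0)).card : ℝ) /
      ((Fintype.piFinset S).card : ℝ) ≤
    ∑ i, (P.degreeOf i : ℝ) / ((S i).card : ℝ) :=
  sz_aux F N P hP S hS
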